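/- The function F(τ) = (τ/(1 − ω_q(τ)))·(p − (q(p−1)/(q−1))·ω_q(τ)) − q·(p·ω_q(τ)^(q−1) − (p−1)·ω_q(τ)^q) is strictly increasing on the interval (0,1). -/

import Mathlib

noncomputable section

open Real Set

/-- `H r z = r·z^(r-1) - (r-1)·z^r`. -/
def H (r z : ℝ) : ℝ := r * z ^ (r - 1) - (r - 1) * z ^ r

/-- `ω` is the inverse of `H r`, mapping `(0,1]` into `[1, r/(r-1))`,
    so that `H r (ω s) = s` for `s ∈ (0,1]`. -/
def IsOmega (r : ℝ) (ω : ℝ → ℝ) : Prop :=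
  ∀ s ∈ Set.Ioc (0 : ℝ) 1, ω s ∈ Set.Ico (1 : ℝ) (r / (r - 1)) ∧ H r (ω s) = s

/-- `τ(s₁,s₂,t) = ((p-q)/p)·(t^p - s₁)/(t^(p-q) - s₁/s₂)`. -/
def tau (p q s₁ s₂ t : ℝ) : ℝ :=
  ((p - q) / p) * ((t ^ p - s₁) / (t ^ (p - q) - s₁ / s₂))

/-- `F(τ)` from the paper, where `ω` plays the role of `ω_q`. -/
def Ffun (p q : ℝ) (ω : ℝ → ℝ) (τ : ℝ) : ℝ :=
  (τ / (1 - ω τ)) * (p - (q * (p - 1) / (q - 1)) * ω τ)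
    - q * (p * ω τ ^ (q - 1) - (p - 1) * ω τ ^ q)

/-- `A(s)` from the paper, where `ω` plays the role of `ω_q`. -/
def Afun (q : ℝ) (ω : ℝ → ℝ) (s : ℝ) : ℝ :=
  s * (ω s / ((q - 1) * (ω s - 1)) + ω s ^ q / s)

/-- `H q` is strictly decreasing on `(1, ∞)` (indeed on `[1, ∞)` but `Ioi` suffices). -/
lemma H_strictAntiOn (q : ℝ) (hq : 1 < q) : StrictAntiOn (H q) (Set.Ioi (1 : ℝ)) := by
  have hderiv : ∀ z ∈ Set.Ioi (1 : ℝ),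
      HasDerivAt (H q) (q * (q - 1) * z ^ (q - 2) * (1 - z)) z := by
    intro z hz
    have hz0 : (0 : ℝ) < z := lt_trans one_pos hz
    have h1 : HasDerivAt (fun z : ℝ => z ^ (q - 1)) ((q - 1) * z ^ (q - 1 - 1)) z :=
      Real.hasDerivAt_rpow_const (Or.inl (ne_of_gt hz0))
    have h2 : HasDerivAt (fun z : ℝ => z ^ q) (q * z ^ (q - 1)) z :=
      Real.hasDerivAt_rpow_const (Or.inl (ne_of_gt hz0))
    have := ((h1.const_mul q).sub (h2.const_mul (q - 1)))
    refine this.congr_deriv ?_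
    have hzq1 : z ^ (q - 1) = z ^ (q - 2) * z := by
      rw [← Real.rpow_add_one (ne_of_gt hz0)]; ring_nf
    rw [hzq1]
    have : q - 1 - 1 = q - 2 := by ring
    rw [this]; ring
  have hconv : Convex ℝ (Set.Ioi (1 : ℝ)) := convex_Ioi 1
  apply strictAntiOn_of_deriv_neg hconv
  · exact fun z hz => (hderiv z hz).continuousAt.continuousWithinAt
  · intro z hz
    rw [interior_Ioi] at hz
    rw [(hderiv z hz).deriv]
    have hz0 : (0 : ℝ) < z := lt_trans one_pos hz
    have h1 : (0 : ℝ) < q * (q - 1) * z ^ (q - 2) :=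
      mul_pos (mul_pos (by linarith) (by linarith)) (Real.rpow_pos_of_pos hz0 _)
    have h2 : 1 - z < 0 := by linarith [Set.mem_Ioi.mp hz]
    exact mul_neg_of_pos_of_neg h1 h2

/-- The key algebraic identity: if `ω τ = w` with `H q w = τ` and `w > 1`, then
`F(τ) = ((p-q)/(q-1))·w^q/(w-1)`. -/
lemma Ffun_eq (p q : ℝ) (hq : 1 < q) (ω : ℝ → ℝ) (τ w : ℝ) (hw : ω τ = w)
    (h1 : 1 < w) (hτ : H q w = τ) :
    Ffun p q ω τ = ((p - q) / (q - 1)) * (w ^ q / (w - 1)) := by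
  have hw0 : (0 : ℝ) < w := lt_trans one_pos h1
  have hwq : w ^ q = w ^ (q - 1) * w := by
    rw [← Real.rpow_add_one (ne_of_gt hw0)]; ring_nf
  rw [Ffun, hw, ← hτ, H, hwq]
  have ha : (0 : ℝ) < w ^ (q - 1) := Real.rpow_pos_of_pos hw0 _
  set a := w ^ (q - 1) with hadef
  have hne1 : (1 : ℝ) - w ≠ 0 := by intro h; nlinarith
  have hne2 : w - 1 ≠ 0 := by intro h; nlinarith
  have hne3 : q - 1 ≠ 0 := by intro h; nlinarith
  field_simp
  ring

/-- `F` is strictly increasing on `(0,1)`. -/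
theorem stmt_5 (p q : ℝ) (hq : 1 < q) (hqp : q < p)
    (ωq : ℝ → ℝ) (hωq : IsOmega q ωq) :
    StrictMonoOn (Ffun p q ωq) (Set.Ioo (0 : ℝ) 1) := by
  have hq1 : (0 : ℝ) < q - 1 := by linarith
  have hM : (1 : ℝ) < q / (q - 1) := by
    rw [lt_div_iff₀ hq1]; linarith
  -- basic facts about ω on (0,1)
  have hω : ∀ τ ∈ Set.Ioo (0 : ℝ) 1,
      1 < ωq τ ∧ ωq τ < q / (q - 1) ∧ H q (ωq τ) = τ := by
    intro τ hτ
    have hmem : τ ∈ Set.Ioc (0 : ℝ) 1 := ⟨hτ.1, le_of_lt hτ.2⟩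
    obtain ⟨⟨hge, hlt⟩, hH⟩ := hωq τ hmem
    refine ⟨?_, hlt, hH⟩
    rcases lt_or_eq_of_le hge with h | h
    · exact h
    · exfalso
      have : H q (ωq τ) = 1 := by
        rw [← h, H, Real.one_rpow, Real.one_rpow]; ring
      rw [hH] at this
      linarith [hτ.2]
  -- g(w) = w^q/(w-1) is strictly decreasing on (1, q/(q-1))
  have hg : StrictAntiOn (fun w : ℝ => w ^ q / (w - 1)) (Set.Ioo 1 (q / (q - 1))) := by
    have hderiv : ∀ w ∈ Set.Ioo (1 : ℝ) (q / (q - 1)),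
        HasDerivAt (fun w : ℝ => w ^ q / (w - 1))
          ((q * w ^ (q - 1) * (w - 1) - w ^ q * 1) / (w - 1) ^ 2) w := by
      intro w hw
      have hw0 : (0 : ℝ) < w := lt_trans one_pos hw.1
      have h1 : HasDerivAt (fun w : ℝ => w ^ q) (q * w ^ (q - 1)) w :=
        Real.hasDerivAt_rpow_const (Or.inl (ne_of_gt hw0))
      have h2 : HasDerivAt (fun w : ℝ => w - 1) 1 w := (hasDerivAt_id w).sub_const 1
      exact h1.div h2 (by intro h; nlinarith [hw.1])
    apply strictAntiOn_of_deriv_neg (convex_Ioo _ _)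
    · exact fun w hw => (hderiv w hw).continuousAt.continuousWithinAt
    · intro w hw
      rw [interior_Ioo] at hw
      rw [(hderiv w hw).deriv]
      have hw0 : (0 : ℝ) < w := lt_trans one_pos hw.1
      have hwq : w ^ q = w ^ (q - 1) * w := by
        rw [← Real.rpow_add_one (ne_of_gt hw0)]; ring_nf
      have ha : (0 : ℝ) < w ^ (q - 1) := Real.rpow_pos_of_pos hw0 _
      have hnum : q * w ^ (q - 1) * (w - 1) - w ^ q * 1 < 0 := by
        rw [hwq]
        have hwlt : (q - 1) * w < q := by
          have := hw.2
          rw [lt_div_iff₀ hq1] at this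
          nlinarith
        nlinarith
      have hden : (0 : ℝ) < (w - 1) ^ 2 := by
        have := hw.1; nlinarith
      exact div_neg_of_neg_of_pos hnum hden
  -- main argument
  intro τ₁ hτ₁ τ₂ hτ₂ hlt
  obtain ⟨hw1a, hw1b, hH1⟩ := hω τ₁ hτ₁
  obtain ⟨hw2a, hw2b, hH2⟩ := hω τ₂ hτ₂
  -- ωq τ₂ < ωq τ₁
  have hwlt : ωq τ₂ < ωq τ₁ := by
    rcases lt_trichotomy (ωq τ₂) (ωq τ₁) with h | h | h
    · exact h
    · exfalso; rw [h, hH1] at hH2; linarith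
    · exfalso
      have := H_strictAntiOn q hq (Set.mem_Ioi.mpr hw1a) (Set.mem_Ioi.mpr hw2a) h
      rw [hH1, hH2] at this; linarith
  rw [Ffun_eq p q hq ωq τ₁ (ωq τ₁) rfl hw1a hH1,
      Ffun_eq p q hq ωq τ₂ (ωq τ₂) rfl hw2a hH2]
  have hC : (0 : ℝ) < (p - q) / (q - 1) := by
    apply div_pos <;> linarith
  have := hg ⟨hw2a, hw2b⟩ ⟨hw1a, hw1b⟩ hwlt
  exact (mul_lt_mul_iff_right₀ hC).mpr this
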